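/- There exists a family (X_p)_{p∈ℕ} of countable dense subsets of ℝ² with the following properties, where for each p, Ξ_p denotes the set of affine lines of ℝ² containing at least two points of X_p: (i) if p ≠ p' then Ξ_p ∩ Ξ_{p'} = ∅; (ii) if p, p', p'' are pairwise distinct, then Δ ∩ Δ' ∩ Δ'' = ∅ for every Δ ∈ Ξ_p, Δ' ∈ Ξ_{p'}, Δ'' ∈ Ξ_{p''}. (Lemma 4.3.) -/

import Mathlib

open Set

noncomputable section

/-- An affine line of `ℝ²`. -/
def IsAffineLine (L : Set (ℝ × ℝ)) : Prop :=
  ∃ a v : ℝ × ℝ, v ≠ 0 ∧ L = {p | ∃ t : ℝ, p = a + t • v}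

/-- The set of affine lines containing at least two points of `X`. -/
def linesThrough (X : Set (ℝ × ℝ)) : Set (Set (ℝ × ℝ)) :=
  {L | IsAffineLine L ∧ ∃ p ∈ X ∩ L, ∃ q ∈ X ∩ L, p ≠ q}

def alpha : ℝ := liouvilleNumber 3
lemma alpha_trans : Transcendental ℚ alpha := by
  have h := transcendental_liouvilleNumber (m := 3) (by norm_num)
  rwa [Transcendental, IsFractionRing.isAlgebraic_iff ℤ ℚ ℝ, ← Transcendental] at h

lemma indep (r₀ r₁ r₂ : ℚ) (h : (r₀ : ℝ) + r₁ * alpha + r₂ * alpha ^ 2 = 0) :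
    r₀ = 0 ∧ r₁ = 0 ∧ r₂ = 0 := by
  by_contra hc
  apply alpha_trans
  refine ⟨Polynomial.C r₀ + Polynomial.C r₁ * Polynomial.X + Polynomial.C r₂ * Polynomial.X ^ 2,
    fun h0 => hc ?_, by simpa using h⟩
  refine ⟨?_, ?_, ?_⟩
  · have := congrArg (fun p => Polynomial.coeff p 0) h0; simpa using this
  · have := congrArg (fun p => Polynomial.coeff p 1) h0; simpa using this
  · have := congrArg (fun p => Polynomial.coeff p 2) h0; simpa using this

def Xset (p : ℕ) : Set (ℝ × ℝ) :=
  Set.range (fun qr : ℚ × ℚ => ((qr.1 : ℝ) + p * alpha, (qr.2 : ℝ) + p * alpha ^ 2))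

lemma Xset_countable (p : ℕ) : (Xset p).Countable := Set.countable_range _

lemma Xset_dense (p : ℕ) : Dense (Xset p) := by
  have h1 : DenseRange (fun qr : ℚ × ℚ => ((qr.1 : ℝ), (qr.2 : ℝ))) := by
    have := (Rat.denseRange_cast (𝕜 := ℝ)).prodMap (Rat.denseRange_cast (𝕜 := ℝ))
    exact this
  have h2 : DenseRange (fun x : ℝ × ℝ => x + ((p : ℝ) * alpha, (p : ℝ) * alpha ^ 2)) :=
    (Homeomorph.addRight ((p : ℝ) * alpha, (p : ℝ) * alpha ^ 2)).surjective.denseRange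
  have h3 := h2.comp h1 (by continuity)
  have : (fun x : ℝ × ℝ => x + ((p : ℝ) * alpha, (p : ℝ) * alpha ^ 2)) ∘
      (fun qr : ℚ × ℚ => ((qr.1 : ℝ), (qr.2 : ℝ))) =
      fun qr : ℚ × ℚ => ((qr.1 : ℝ) + p * alpha, (qr.2 : ℝ) + p * alpha ^ 2) := by
    funext qr; simp [Prod.ext_iff]
  rwa [this] at h3

lemma line_eq (p : ℕ) (L : Set (ℝ × ℝ)) (hL : L ∈ linesThrough (Xset p)) :
    ∃ A B E : ℚ, ¬(A = 0 ∧ B = 0) ∧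
      ∀ x ∈ L, (A : ℝ) * x.1 + B * x.2 = E + p * (A * alpha + B * alpha ^ 2) := by
  obtain ⟨⟨a, v, hv, rfl⟩, P, ⟨hPX, hPL⟩, Q, ⟨hQX, hQL⟩, hPQ⟩ := hL
  obtain ⟨⟨r₁, r₂⟩, rfl⟩ := hPX
  obtain ⟨⟨s₁, s₂⟩, rfl⟩ := hQX
  obtain ⟨t₁, ht₁⟩ := hPL
  obtain ⟨t₂, ht₂⟩ := hQL
  refine ⟨s₂ - r₂, r₁ - s₁, (s₂ - r₂) * r₁ + (r₁ - s₁) * r₂, ?_, ?_⟩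
  · rintro ⟨h1, h2⟩
    apply hPQ
    have e1 : s₂ = r₂ := by linarith [sub_eq_zero.mp (by exact_mod_cast congrArg (Rat.cast (K := ℚ)) h1)]
    have e2 : r₁ = s₁ := by linarith [sub_eq_zero.mp (by exact_mod_cast congrArg (Rat.cast (K := ℚ)) h2)]
    simp [e1, e2]
  · have ht12 : t₁ ≠ t₂ := by
      rintro rfl; exact hPQ (by rw [ht₁, ht₂])
    -- key: normal is orthogonal to v
    have hQP : ((s₁ : ℝ) - r₁, (s₂ : ℝ) - r₂) = (t₂ - t₁) • v := by
      have := congrArg₂ (fun x y : ℝ × ℝ => y - x) ht₁ ht₂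
      simp only [Prod.ext_iff] at this ⊢
      constructor
      · have := this.1; simp at this ⊢; linarith [this]
      · have := this.2; simp at this ⊢; linarith [this]
    have hna : ((s₂ : ℝ) - r₂) * v.1 + ((r₁ : ℝ) - s₁) * v.2 = 0 := by
      have h1 : (s₁ : ℝ) - r₁ = (t₂ - t₁) * v.1 := by
        have := congrArg Prod.fst hQP; simpa using this
      have h2 : (s₂ : ℝ) - r₂ = (t₂ - t₁) * v.2 := by
        have := congrArg Prod.snd hQP; simpa using this
      have hne : (t₂ - t₁) ≠ 0 := sub_ne_zero.mpr (Ne.symm ht12)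
      have : (t₂ - t₁) * (((s₂ : ℝ) - r₂) * v.1 + ((r₁ : ℝ) - s₁) * v.2) = 0 := by
        linear_combination (-((s₂ : ℝ) - r₂)) * h1 + ((s₁ : ℝ) - r₁) * h2
      exact (mul_eq_zero.mp this).resolve_left hne
    rintro x ⟨t, rfl⟩
    have hx1 : (a + t • v).1 = a.1 + t * v.1 := rfl
    have hx2 : (a + t • v).2 = a.2 + t * v.2 := rfl
    have hP1 : (r₁ : ℝ) + p * alpha = a.1 + t₁ * v.1 := by
      have := congrArg Prod.fst ht₁; simpa using this
    have hP2 : (r₂ : ℝ) + p * alpha ^ 2 = a.2 + t₁ * v.2 := by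
      have := congrArg Prod.snd ht₁; simpa using this
    rw [hx1, hx2]
    push_cast
    linear_combination (-((s₂ : ℝ) - r₂)) * hP1 - ((r₁ : ℝ) - s₁) * hP2 + (t - t₁) * hna

lemma no_common (p p' : ℕ) (hpp : p ≠ p') (A B E A' B' E' : ℚ)
    (hAB : ¬(A = 0 ∧ B = 0)) (hAB' : ¬(A' = 0 ∧ B' = 0)) (hdep : A * B' = A' * B)
    (x : ℝ × ℝ)
    (h1 : (A : ℝ) * x.1 + B * x.2 = E + p * (A * alpha + B * alpha ^ 2))
    (h2 : (A' : ℝ) * x.1 + B' * x.2 = E' + p' * (A' * alpha + B' * alpha ^ 2)) : False := by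
  have hpq : (p : ℚ) - p' ≠ 0 := sub_ne_zero.mpr (by exact_mod_cast hpp)
  have hdR : (A : ℝ) * B' = A' * B := by exact_mod_cast congrArg (Rat.cast (K := ℝ)) hdep
  have rel1 : ((A' * E - A * E' : ℚ) : ℝ) + (A * A' * ((p : ℚ) - p') : ℚ) * alpha
      + ((A * B' * ((p : ℚ) - p') : ℚ) : ℝ) * alpha ^ 2 = 0 := by
    push_cast
    linear_combination (-(A' : ℝ)) * h1 + (A : ℝ) * h2 + ((p : ℝ) * alpha ^ 2 - x.2) * hdR
  have rel2 : ((B' * E - B * E' : ℚ) : ℝ) + (A * B' * ((p : ℚ) - p') : ℚ) * alpha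
      + ((B * B' * ((p : ℚ) - p') : ℚ) : ℝ) * alpha ^ 2 = 0 := by
    push_cast
    linear_combination (-(B' : ℝ)) * h1 + (B : ℝ) * h2 + (x.1 - (p' : ℝ) * alpha) * hdR
  obtain ⟨-, e1, e2⟩ := indep _ _ _ rel1
  obtain ⟨-, e3, e4⟩ := indep _ _ _ rel2
  have hAA' : A * A' = 0 := by
    rcases mul_eq_zero.mp e1 with h | h
    · exact h
    · exact absurd h hpq
  have hAB'0 : A * B' = 0 := by
    rcases mul_eq_zero.mp e2 with h | h
    · exact h
    · exact absurd h hpq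
  have hBB' : B * B' = 0 := by
    rcases mul_eq_zero.mp e4 with h | h
    · exact h
    · exact absurd h hpq
  have hA'B : A' * B = 0 := by rw [← hdep]; exact hAB'0
  rcases eq_or_ne A 0 with hA | hA
  · have hB : B ≠ 0 := fun hB => hAB ⟨hA, hB⟩
    have hA' : A' = 0 := by
      rcases mul_eq_zero.mp hA'B with h | h
      · exact h
      · exact absurd h hB
    have hB' : B' = 0 := by
      rcases mul_eq_zero.mp hBB' with h | h
      · exact absurd h hB
      · exact h
    exact hAB' ⟨hA', hB'⟩
  · have hA' : A' = 0 := by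
      rcases mul_eq_zero.mp hAA' with h | h
      · exact absurd h hA
      · exact h
    have hB' : B' = 0 := by
      rcases mul_eq_zero.mp hAB'0 with h | h
      · exact absurd h hA
      · exact h
    exact hAB' ⟨hA', hB'⟩

lemma cond1 (p p' : ℕ) (h : p ≠ p') :
    linesThrough (Xset p) ∩ linesThrough (Xset p') = ∅ := by
  ext L
  simp only [Set.mem_inter_iff, Set.mem_empty_iff_false, iff_false]
  rintro ⟨hL, hL'⟩
  obtain ⟨A, B, E, hAB, hEq⟩ := line_eq p L hL
  obtain ⟨A', B', E', hAB', hEq'⟩ := line_eq p' L hL'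
  obtain ⟨-, P, ⟨-, hPL⟩, Q, ⟨-, hQL⟩, hPQ⟩ := hL
  have e1 := hEq P hPL
  have e1' := hEq Q hQL
  have e2 := hEq' P hPL
  have e2' := hEq' Q hQL
  have d1 : (A : ℝ) * (P.1 - Q.1) + B * (P.2 - Q.2) = 0 := by linear_combination e1 - e1'
  have d2 : (A' : ℝ) * (P.1 - Q.1) + B' * (P.2 - Q.2) = 0 := by linear_combination e2 - e2'
  have hPQne : P.1 - Q.1 ≠ 0 ∨ P.2 - Q.2 ≠ 0 := by
    by_contra hcon
    push_neg at hcon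
    exact hPQ (Prod.ext (by linarith [hcon.1]) (by linarith [hcon.2]))
  have hdR : (A : ℝ) * B' = A' * B := by
    rcases hPQne with hu | hw
    · have : ((A : ℝ) * B' - A' * B) * (P.1 - Q.1) = 0 := by
        linear_combination (B' : ℝ) * d1 - (B : ℝ) * d2
      have := (mul_eq_zero.mp this).resolve_right hu
      linarith
    · have : ((A' : ℝ) * B - A * B') * (P.2 - Q.2) = 0 := by
        linear_combination (A' : ℝ) * d1 - (A : ℝ) * d2
      have := (mul_eq_zero.mp this).resolve_right hw
      linarith
  have hdep : A * B' = A' * B := by exact_mod_cast hdR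
  exact no_common p p' h A B E A' B' E' hAB hAB' hdep P e1 e2

lemma cond2 (p p' p'' : ℕ) (h1 : p ≠ p') (h2 : p ≠ p'') (h3 : p' ≠ p'')
    (Δ : Set (ℝ × ℝ)) (hΔ : Δ ∈ linesThrough (Xset p))
    (Δ' : Set (ℝ × ℝ)) (hΔ' : Δ' ∈ linesThrough (Xset p'))
    (Δ'' : Set (ℝ × ℝ)) (hΔ'' : Δ'' ∈ linesThrough (Xset p'')) :
    Δ ∩ Δ' ∩ Δ'' = ∅ := by
  ext x
  simp only [Set.mem_inter_iff, Set.mem_empty_iff_false, iff_false]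
  rintro ⟨⟨hx1, hx2⟩, hx3⟩
  obtain ⟨A₁, B₁, E₁, hAB₁, hEq₁⟩ := line_eq p Δ hΔ
  obtain ⟨A₂, B₂, E₂, hAB₂, hEq₂⟩ := line_eq p' Δ' hΔ'
  obtain ⟨A₃, B₃, E₃, hAB₃, hEq₃⟩ := line_eq p'' Δ'' hΔ''
  have q1 := hEq₁ x hx1
  have q2 := hEq₂ x hx2
  have q3 := hEq₃ x hx3
  by_cases hD : A₁ * B₂ - A₂ * B₁ = 0
  · exact no_common p p' h1 A₁ B₁ E₁ A₂ B₂ E₂ hAB₁ hAB₂ (by linarith) x q1 q2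
  · set lam : ℚ := (A₃ * B₂ - A₂ * B₃) / (A₁ * B₂ - A₂ * B₁) with hlam
    set mu : ℚ := (A₁ * B₃ - A₃ * B₁) / (A₁ * B₂ - A₂ * B₁) with hmu
    have hA3 : A₃ = lam * A₁ + mu * A₂ := by
      rw [hlam, hmu, div_mul_eq_mul_div, div_mul_eq_mul_div, ← add_div, eq_div_iff hD]; ring
    have hB3 : B₃ = lam * B₁ + mu * B₂ := by
      rw [hlam, hmu, div_mul_eq_mul_div, div_mul_eq_mul_div, ← add_div, eq_div_iff hD]; ring
    have rel : ((E₃ - lam * E₁ - mu * E₂ : ℚ) : ℝ)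
        + (((p'' : ℚ) * A₃ - lam * p * A₁ - mu * p' * A₂ : ℚ) : ℝ) * alpha
        + (((p'' : ℚ) * B₃ - lam * p * B₁ - mu * p' * B₂ : ℚ) : ℝ) * alpha ^ 2 = 0 := by
      have hA3R : (A₃ : ℝ) = lam * A₁ + mu * A₂ := by exact_mod_cast congrArg (Rat.cast (K := ℝ)) hA3
      have hB3R : (B₃ : ℝ) = lam * B₁ + mu * B₂ := by exact_mod_cast congrArg (Rat.cast (K := ℝ)) hB3
      push_cast
      linear_combination (lam : ℝ) * q1 + (mu : ℝ) * q2 - q3 + x.1 * hA3R + x.2 * hB3R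
    obtain ⟨-, f1, f2⟩ := indep _ _ _ rel
    have hu : lam * ((p'' : ℚ) - p) * A₁ + mu * ((p'' : ℚ) - p') * A₂ = 0 := by
      linear_combination f1 - (p'' : ℚ) * hA3
    have hw : lam * ((p'' : ℚ) - p) * B₁ + mu * ((p'' : ℚ) - p') * B₂ = 0 := by
      linear_combination f2 - (p'' : ℚ) * hB3
    have hppq : ((p'' : ℚ) - p) ≠ 0 := sub_ne_zero.mpr (by exact_mod_cast h2.symm)
    have hppq' : ((p'' : ℚ) - p') ≠ 0 := sub_ne_zero.mpr (by exact_mod_cast h3.symm)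
    have hl : lam * ((p'' : ℚ) - p) * (A₁ * B₂ - A₂ * B₁) = 0 := by
      linear_combination B₂ * hu - A₂ * hw
    have hm : mu * ((p'' : ℚ) - p') * (A₁ * B₂ - A₂ * B₁) = 0 := by
      linear_combination A₁ * hw - B₁ * hu
    have hlam0 : lam = 0 := by
      have := (mul_eq_zero.mp hl).resolve_right hD
      exact (mul_eq_zero.mp this).resolve_right hppq
    have hmu0 : mu = 0 := by
      have := (mul_eq_zero.mp hm).resolve_right hD
      exact (mul_eq_zero.mp this).resolve_right hppq'
    apply hAB₃
    constructor
    · rw [hA3, hlam0, hmu0]; ring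
    · rw [hB3, hlam0, hmu0]; ring

/-- Lemma 4.3. -/
theorem handel_lem_4_3 :
    ∃ X : ℕ → Set (ℝ × ℝ),
      (∀ p, (X p).Countable ∧ Dense (X p)) ∧
      (∀ p p', p ≠ p' → linesThrough (X p) ∩ linesThrough (X p') = ∅) ∧
      (∀ p p' p'', p ≠ p' → p ≠ p'' → p' ≠ p'' →
        ∀ Δ ∈ linesThrough (X p), ∀ Δ' ∈ linesThrough (X p'),
          ∀ Δ'' ∈ linesThrough (X p''), Δ ∩ Δ' ∩ Δ'' = ∅) :=
  ⟨Xset, fun p => ⟨Xset_countable p, Xset_dense p⟩, cond1,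
    fun p p' p'' h1 h2 h3 Δ hΔ Δ' hΔ' Δ'' hΔ'' => cond2 p p' p'' h1 h2 h3 Δ hΔ Δ' hΔ' Δ'' hΔ''⟩
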